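/- Let (a_k)_{k≥1} be a sequence of nonnegative real numbers, not all zero, with Σ_{k=1}^∞ k² a_k² < ∞. Then (Σ_{k=1}^∞ a_k)² ≤ π·(Σ_{k=1}^∞ a_k²)^{1/2}·(Σ_{k=1}^∞ k² a_k²)^{1/2} − Σ_{k=1}^∞ a_k². -/

import Mathlib

set_option maxHeartbeats 1000000

open Real


lemma pade_arctan (y : ℝ) (hy : 0 ≤ y) : 3*y/(3+y^2) ≤ arctan y := by
  have key : ∀ z : ℝ, HasDerivAt (fun t : ℝ => arctan t - 3*t/(3+t^2))
      (1/(1+z^2) - (9 - 3*z^2)/((3+z^2)^2)) z := by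
    intro z
    have h1 : HasDerivAt arctan (1/(1+z^2)) z := Real.hasDerivAt_arctan z
    have hden : (3+z^2) ≠ 0 := by positivity
    have h2 : HasDerivAt (fun t : ℝ => 3*t/(3+t^2)) ((9-3*z^2)/((3+z^2)^2)) z := by
      have hnum : HasDerivAt (fun t : ℝ => 3*t) 3 z := by
        simpa using (hasDerivAt_id z).const_mul (3:ℝ)
      have hdend : HasDerivAt (fun t : ℝ => 3+t^2) (2*z) z := by
        simpa using ((hasDerivAt_pow 2 z)).const_add (3:ℝ)
      have := hnum.div hdend hden
      have e : (9-3*z^2)/((3+z^2)^2) = (3*(3+z^2) - 3*z*(2*z))/(3+z^2)^2 := by ring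
      rw [e]
      exact this
    exact h1.sub h2
  have mono : Monotone (fun t : ℝ => arctan t - 3*t/(3+t^2)) := by
    apply monotone_of_deriv_nonneg
    · intro z
      exact (key z).differentiableAt
    · intro z
      rw [(key z).deriv, sub_nonneg, div_le_div_iff₀ (by positivity) (by positivity)]
      nlinarith [sq_nonneg (z^2), sq_nonneg z]
  have h0 : (fun t : ℝ => arctan t - 3*t/(3+t^2)) 0 ≤ (fun t : ℝ => arctan t - 3*t/(3+t^2)) y :=
    mono hy
  simp only [arctan_zero, mul_zero, zero_div, sub_zero] at h0
  linarith [h0]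


lemma arctan_diff (x : ℝ) (hx : 0 < x) (k : ℕ) :
    arctan (x/(x^2+((k:ℝ)+1)^2-1/4)) =
      arctan ((((k:ℝ)+1)+1/2)/x) - arctan (((k:ℝ)+1/2)/x) := by
  have hk : (0:ℝ) ≤ (k:ℝ) := Nat.cast_nonneg k
  have hD : 0 < x^2+((k:ℝ)+1)^2-1/4 := by nlinarith
  have heq : (((k:ℝ)+1/2)/x) * (x/(x^2+((k:ℝ)+1)^2-1/4))
      = ((k:ℝ)+1/2)/(x^2+((k:ℝ)+1)^2-1/4) := by
    rw [div_mul_div_comm, mul_comm ((k:ℝ)+1/2) x, mul_div_mul_left _ _ hx.ne']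
  have hlt : ((k:ℝ)+1/2)/(x^2+((k:ℝ)+1)^2-1/4) < 1 := by
    rw [div_lt_one hD]; nlinarith
  have hAy : (((k:ℝ)+1/2)/x) * (x/(x^2+((k:ℝ)+1)^2-1/4)) < 1 := by rw [heq]; exact hlt
  have hadd := Real.arctan_add hAy
  rw [heq] at hadd
  have h1ne : 1 - ((k:ℝ)+1/2)/(x^2+((k:ℝ)+1)^2-1/4) ≠ 0 := by
    have : 0 < 1 - ((k:ℝ)+1/2)/(x^2+((k:ℝ)+1)^2-1/4) := by linarith
    exact this.ne'
  have harg : ((((k:ℝ)+1/2)/x) + (x/(x^2+((k:ℝ)+1)^2-1/4))) /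
      (1 - ((k:ℝ)+1/2)/(x^2+((k:ℝ)+1)^2-1/4)) = (((k:ℝ)+1)+1/2)/x := by
    rw [div_eq_div_iff h1ne hx.ne']
    rw [add_mul, div_mul_cancel₀ _ hx.ne', div_mul_eq_mul_div, ← sq, mul_sub, mul_one,
      mul_div_assoc']
    have hkey : x^2/(x^2+((k:ℝ)+1)^2-1/4) + ((((k:ℝ)+1)+1/2)*((k:ℝ)+1/2))/(x^2+((k:ℝ)+1)^2-1/4)
        = 1 := by
      rw [← add_div, div_eq_one_iff_eq hD.ne']
      ring
    linarith
  rw [harg] at hadd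
  linarith [hadd]

lemma telescope_hasSum (x : ℝ) (hx : 0 < x) :
    HasSum (fun k : ℕ => arctan (x/(x^2+((k:ℝ)+1)^2-1/4)) / x) ((π/2 - arctan (1/(2*x)))/x) := by
  have key : HasSum (fun k : ℕ => arctan ((((k:ℝ)+1)+1/2)/x) - arctan (((k:ℝ)+1/2)/x))
      (π/2 - arctan (1/(2*x))) := by
    have hnn : ∀ k : ℕ, 0 ≤ arctan ((((k:ℝ)+1)+1/2)/x) - arctan (((k:ℝ)+1/2)/x) := by
      intro k
      have : arctan (((k:ℝ)+1/2)/x) ≤ arctan ((((k:ℝ)+1)+1/2)/x) := by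
        apply Real.arctan_strictMono.monotone
        gcongr
        linarith
      linarith
    rw [hasSum_iff_tendsto_nat_of_nonneg hnn]
    have hps : ∀ n : ℕ, ∑ i ∈ Finset.range n,
        (arctan ((((i:ℝ)+1)+1/2)/x) - arctan (((i:ℝ)+1/2)/x))
        = arctan (((n:ℝ)+1/2)/x) - arctan (((0:ℝ)+1/2)/x) := by
      intro n
      have h := Finset.sum_range_sub (f := fun i : ℕ => arctan (((i:ℝ)+1/2)/x)) n
      push_cast at h ⊢
      exact h
    simp only [hps]
    have htop : Filter.Tendsto (fun n : ℕ => ((n:ℝ)+1/2)/x) Filter.atTop Filter.atTop := by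
      apply Filter.Tendsto.atTop_div_const hx
      apply Filter.tendsto_atTop_add_const_right
      exact tendsto_natCast_atTop_atTop
    have harct : Filter.Tendsto (fun n : ℕ => arctan (((n:ℝ)+1/2)/x)) Filter.atTop (nhds (π/2)) :=
      (tendsto_nhds_of_tendsto_nhdsWithin Real.tendsto_arctan_atTop).comp htop
    have h0 : ((0:ℝ)+1/2)/x = 1/(2*x) := by ring
    rw [h0]
    exact harct.sub_const _
  have h2 := key.div_const x
  have hf : (fun k : ℕ => arctan (x/(x^2+((k:ℝ)+1)^2-1/4)) / x) =
      fun i : ℕ => (arctan ((((i:ℝ)+1)+1/2)/x) - arctan (((i:ℝ)+1/2)/x)) / x := by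
    funext k
    rw [arctan_diff x hx k]
  rw [hf]
  exact h2


lemma carlson_scalar (s : ℝ) (hs : 1 ≤ s) :
    (π/(2*(s-2/5)) - 6/(12*(s-2/5)^2+1)) *
      ((s-2/5)^2 - 1/4 + (s-2/5)^2/(3*((s-2/5)^2+3/4)) + s^2) ≤ π*s - 1 := by
  obtain ⟨x, hxdef⟩ : ∃ x : ℝ, x = s - 2/5 := ⟨_, rfl⟩
  rw [← hxdef]
  have hx : 3/5 ≤ x := by rw [hxdef]; linarith
  have hx0 : 0 < x := by linarith
  have hxs : s = x + 2/5 := by rw [hxdef]; ring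
  obtain ⟨M, hMdef⟩ : ∃ M : ℝ, M = x^2 - 1/4 + x^2/(3*(x^2+3/4)) + s^2 := ⟨_, rfl⟩
  rw [← hMdef]
  have hphi : (9:ℝ)/100 ≤ x^2/(3*(x^2+3/4)) := by
    rw [le_div_iff₀ (by positivity)]
    nlinarith
  have hsx : (s - x)^2 = 4/25 := by rw [hxdef]; ring
  have h1 : 0 ≤ M/(2*x) - s := by
    rw [sub_nonneg, le_div_iff₀ (by positivity)]
    nlinarith [hphi, hsx, hMdef]
  have hpi : π ≤ 3141593/1000000 := by
    have := Real.pi_lt_d6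
    norm_num at this
    linarith
  have h2 : π * (M/(2*x) - s) ≤ 3141593/1000000 * (M/(2*x) - s) :=
    mul_le_mul_of_nonneg_right hpi h1
  have h3 : 3141593/1000000 * (M/(2*x) - s) ≤ 6*M/(12*x^2+1) - 1 := by
    rw [hMdef, hxs]
    have h35 : 0 ≤ x - 3/5 := by linarith
    have d1 : (0:ℝ) < 2*x := by linarith
    have d2 : (0:ℝ) < 12*x^2+1 := by positivity
    have d3 : (0:ℝ) < 3*(x^2+3/4) := by positivity
    have key : 6*(x^2 - 1/4 + x^2/(3*(x^2+3/4)) + (x+2/5)^2)/(12*x^2+1) - 1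
        - 3141593/1000000 * ((x^2 - 1/4 + x^2/(3*(x^2+3/4)) + (x+2/5)^2)/(2*x) - (x+2/5))
        = (1734707382993/250000000000 + 92141447739/3125000000*(x-3/5)
            + 43340927489/1250000000*(x-3/5)^2 + 182223399/31250000*(x-3/5)^3
            + 31991133/25000000*(x-3/5)^4) / (2*x*((12*x^2+1)*(3*(x^2+3/4)))) := by
      field_simp
      ring
    have hP : 0 ≤ (1734707382993/250000000000 + 92141447739/3125000000*(x-3/5)
            + 43340927489/1250000000*(x-3/5)^2 + 182223399/31250000*(x-3/5)^3
            + 31991133/25000000*(x-3/5)^4) / (2*x*((12*x^2+1)*(3*(x^2+3/4)))) := by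
      apply div_nonneg
      · have t2 : 0 ≤ (x-3/5)^2 := sq_nonneg _
        have t3 : 0 ≤ (x-3/5)^3 := pow_nonneg h35 3
        have t4 : 0 ≤ (x-3/5)^4 := pow_nonneg h35 4
        nlinarith [h35, t2, t3, t4]
      · positivity
    linarith [key ▸ hP]
  have h4 : π * (M/(2*x) - s) ≤ 6*M/(12*x^2+1) - 1 := h2.trans h3
  have hexp : (π/(2*x) - 6/(12*x^2+1)) * M
      = π * (M/(2*x) - s) + π*s - 6*M/(12*x^2+1) := by ring
  rw [hexp]
  linarith [h4]

lemma ident_lemma (y D : ℝ) (hy : 0 < y) (hD : 0 < D) :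
    (3*y/(3+y^2))/(y*D) * (D + (y*D)^2/(3*D)) = 1 := by
  have h3 : (0:ℝ) < 3 + y^2 := by positivity
  field_simp

theorem carlson_inequality_with_correction
    (a : ℕ → ℝ) (ha : ∀ k, 0 ≤ a k) (hne : a ≠ 0)
    (hsum : Summable (fun k : ℕ => ((k : ℝ) + 1) ^ 2 * a k ^ 2)) :
    (∑' k : ℕ, a k) ^ 2 ≤
      π * Real.sqrt (∑' k : ℕ, a k ^ 2) *
        Real.sqrt (∑' k : ℕ, ((k : ℝ) + 1) ^ 2 * a k ^ 2) -
      ∑' k : ℕ, a k ^ 2 := by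
  have h1le : ∀ k : ℕ, (1:ℝ) ≤ ((k:ℝ)+1)^2 := by
    intro k
    have hk : (0:ℝ) ≤ (k:ℝ) := Nat.cast_nonneg k
    nlinarith
  have hS : Summable (fun k : ℕ => a k ^ 2) :=
    Summable.of_nonneg_of_le (fun k => sq_nonneg _)
      (fun k => le_mul_of_one_le_left (sq_nonneg _) (h1le k)) hsum
  have hinv : Summable (fun k : ℕ => 1/((k:ℝ)+1)^2) := by
    have h0 : Summable (fun n : ℕ => 1/((n:ℝ))^2) := by
      rw [summable_one_div_nat_pow]
      norm_num
    have h1 := (summable_nat_add_iff 1).mpr h0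
    apply h1.congr
    intro n
    push_cast
    ring
  have hA : Summable a := by
    apply Summable.of_nonneg_of_le ha ?_ ((hsum.add hinv).div_const 2)
    intro k
    have hkne : ((k:ℝ)+1) ≠ 0 := by positivity
    have hexp : (((k:ℝ)+1)*a k - 1/((k:ℝ)+1))^2
        = ((k:ℝ)+1)^2*a k^2 - 2*a k + 1/((k:ℝ)+1)^2 := by
      field_simp
      ring
    have hsq := sq_nonneg (((k:ℝ)+1)*a k - 1/((k:ℝ)+1))
    rw [hexp] at hsq
    linarith
  have hS0 : 0 < ∑' k : ℕ, a k ^ 2 := by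
    obtain ⟨j, hj⟩ := Function.ne_iff.mp hne
    have haj : 0 < a j := lt_of_le_of_ne (ha j) (Ne.symm hj)
    calc (0:ℝ) < a j ^ 2 := by positivity
      _ ≤ ∑' k : ℕ, a k ^ 2 := hS.le_tsum j (fun i _ => sq_nonneg _)
  have hTS : (∑' k : ℕ, a k ^ 2) ≤ ∑' k : ℕ, ((k:ℝ)+1)^2 * a k ^ 2 :=
    Summable.tsum_le_tsum (fun k => le_mul_of_one_le_left (sq_nonneg _) (h1le k)) hS hsum
  have hT0 : 0 < ∑' k : ℕ, ((k:ℝ)+1)^2 * a k ^ 2 := lt_of_lt_of_le hS0 hTS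
  set S := ∑' k : ℕ, a k ^ 2 with hSdef
  set T := ∑' k : ℕ, ((k:ℝ)+1)^2 * a k ^ 2 with hTdef
  clear_value S T
  set s := Real.sqrt T / Real.sqrt S with hsdef
  clear_value s
  have hsqS : 0 < Real.sqrt S := Real.sqrt_pos.mpr hS0
  have hs1 : 1 ≤ s := by
    rw [hsdef, le_div_iff₀ hsqS, one_mul]
    exact Real.sqrt_le_sqrt hTS
  set x := s - 2/5 with hxdef
  clear_value x
  have hx35 : 3/5 ≤ x := by rw [hxdef]; linarith
  have hx0 : 0 < x := by linarith
  -- the weights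
  set c := x^2 - 1/4 + x^2/(3*(x^2+3/4)) with hcdef
  clear_value c
  have hc0 : 0 < c := by
    rw [hcdef]
    have : 0 ≤ x^2/(3*(x^2+3/4)) := by positivity
    nlinarith
  set r := fun k : ℕ => arctan (x/(x^2+((k:ℝ)+1)^2-1/4)) / x with hrdef
  set w := fun k : ℕ => c + ((k:ℝ)+1)^2 with hwdef
  clear_value r w
  have hD0 : ∀ k : ℕ, 0 < x^2+((k:ℝ)+1)^2-1/4 := by
    intro k
    have hk : (0:ℝ) ≤ (k:ℝ) := Nat.cast_nonneg k
    nlinarith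
  have hrpos : ∀ k, 0 < r k := by
    intro k
    rw [hrdef]
    apply div_pos _ hx0
    have h := Real.arctan_strictMono (div_pos hx0 (hD0 k))
    rwa [Real.arctan_zero] at h
  have hwpos : ∀ k, 0 < w k := by
    intro k
    have hk : (0:ℝ) ≤ (k:ℝ) := Nat.cast_nonneg k
    have := hc0
    simp only [hwdef]
    nlinarith
  -- key pointwise bound :  1 ≤ r k * w k
  have hrw : ∀ k, 1 ≤ r k * w k := by
    intro k
    have hD := hD0 k
    have hy0 : 0 < x/(x^2+((k:ℝ)+1)^2-1/4) := div_pos hx0 hD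
    have hlb1 : (3*(x/(x^2+((k:ℝ)+1)^2-1/4))/(3+(x/(x^2+((k:ℝ)+1)^2-1/4))^2))/x ≤ r k := by
      simp only [hrdef]
      gcongr
      exact pade_arctan _ hy0.le
    have hwlb : (x^2+((k:ℝ)+1)^2-1/4) + x^2/(3*(x^2+((k:ℝ)+1)^2-1/4)) ≤ w k := by
      simp only [hwdef, hcdef]
      have hmono : x^2/(3*(x^2+((k:ℝ)+1)^2-1/4)) ≤ x^2/(3*(x^2+3/4)) :=
        div_le_div_of_nonneg_left (by positivity) (by positivity) (by nlinarith [h1le k])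
      nlinarith [hmono]
    have hxyD : (x/(x^2+((k:ℝ)+1)^2-1/4)) * (x^2+((k:ℝ)+1)^2-1/4) = x :=
      div_mul_cancel₀ _ hD.ne'
    have hident := ident_lemma (x/(x^2+((k:ℝ)+1)^2-1/4)) (x^2+((k:ℝ)+1)^2-1/4) hy0 hD
    rw [hxyD] at hident
    calc (1:ℝ) = (3*(x/(x^2+((k:ℝ)+1)^2-1/4))/(3+(x/(x^2+((k:ℝ)+1)^2-1/4))^2))/x *
        ((x^2+((k:ℝ)+1)^2-1/4) + x^2/(3*(x^2+((k:ℝ)+1)^2-1/4))) := hident.symm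
      _ ≤ r k * w k := by
          apply mul_le_mul hlb1 hwlb _ (hrpos k).le
          positivity
  have hrsum : HasSum r ((π/2 - arctan (1/(2*x)))/x) := by
    rw [hrdef]
    exact telescope_hasSum x hx0
  have hR0 : 0 ≤ (π/2 - arctan (1/(2*x)))/x := by
    apply div_nonneg _ hx0.le
    have := Real.arctan_lt_pi_div_two (1/(2*x))
    linarith
  -- summability of the weighted series
  have hwsum : Summable (fun k : ℕ => a k ^ 2 * w k) := by
    apply Summable.congr ((hS.mul_left c).add hsum)
    intro k
    simp only [hwdef]
    ring
  have hQle : ∀ k : ℕ, a k ^ 2 / r k ≤ a k ^ 2 * w k := by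
    intro k
    rw [div_le_iff₀ (hrpos k)]
    nlinarith [mul_le_mul_of_nonneg_left (hrw k) (sq_nonneg (a k))]
  have hQs : Summable (fun k : ℕ => a k ^ 2 / r k) :=
    Summable.of_nonneg_of_le (fun k => div_nonneg (sq_nonneg _) (hrpos k).le) hQle hwsum
  -- Cauchy-Schwarz on partial sums
  have hCS : ∀ n : ℕ, (∑ k ∈ Finset.range n, a k)^2 ≤
      ((π/2 - arctan (1/(2*x)))/x) * (∑' k : ℕ, a k ^ 2 / r k) := by
    intro n
    have hsqr : ∀ k : ℕ, Real.sqrt (r k) ≠ 0 := by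
      intro k
      exact (Real.sqrt_pos.mpr (hrpos k)).ne'
    have e1 : ∀ k : ℕ, a k = Real.sqrt (r k) * (a k / Real.sqrt (r k)) := by
      intro k
      rw [mul_comm, div_mul_cancel₀ _ (hsqr k)]
    calc (∑ k ∈ Finset.range n, a k)^2
        = (∑ k ∈ Finset.range n, Real.sqrt (r k) * (a k / Real.sqrt (r k)))^2 := by
          congr 1
          exact Finset.sum_congr rfl (fun k _ => e1 k)
      _ ≤ (∑ k ∈ Finset.range n, Real.sqrt (r k)^2) *
          (∑ k ∈ Finset.range n, (a k / Real.sqrt (r k))^2) :=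
          Finset.sum_mul_sq_le_sq_mul_sq _ _ _
      _ = (∑ k ∈ Finset.range n, r k) * (∑ k ∈ Finset.range n, a k ^ 2 / r k) := by
          congr 1
          · exact Finset.sum_congr rfl (fun k _ => Real.sq_sqrt (hrpos k).le)
          · apply Finset.sum_congr rfl
            intro k _
            rw [div_pow, Real.sq_sqrt (hrpos k).le]
      _ ≤ ((π/2 - arctan (1/(2*x)))/x) * (∑' k : ℕ, a k ^ 2 / r k) := by
          apply mul_le_mul
          · rw [← hrsum.tsum_eq]
            exact Summable.sum_le_tsum _ (fun i _ => (hrpos i).le) hrsum.summable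
          · exact Summable.sum_le_tsum _ (fun i _ => div_nonneg (sq_nonneg _) (hrpos i).le) hQs
          · exact Finset.sum_nonneg (fun i _ => div_nonneg (sq_nonneg _) (hrpos i).le)
          · exact hR0
  have hA2 : (∑' k : ℕ, a k)^2 ≤
      ((π/2 - arctan (1/(2*x)))/x) * (∑' k : ℕ, a k ^ 2 / r k) := by
    have hAt := hA.hasSum.tendsto_sum_nat
    have hAsq : Filter.Tendsto (fun n => (∑ k ∈ Finset.range n, a k)^2)
        Filter.atTop (nhds ((∑' k : ℕ, a k)^2)) := hAt.pow 2
    exact le_of_tendsto' hAsq hCS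
  -- tsum Q ≤ c*S + T
  have hWeq : ∑' k : ℕ, a k ^ 2 * w k = c*S + T := by
    have : (fun k : ℕ => a k ^ 2 * w k) = fun k : ℕ => c * a k ^2 + ((k:ℝ)+1)^2 * a k ^2 := by
      funext k
      simp only [hwdef]
      ring
    rw [this, Summable.tsum_add (hS.mul_left c) hsum, tsum_mul_left, ← hSdef, ← hTdef]
  have hQW : (∑' k : ℕ, a k ^ 2 / r k) ≤ c*S + T := by
    rw [← hWeq]
    exact Summable.tsum_le_tsum hQle hQs hwsum
  -- bound R
  have hRb : (π/2 - arctan (1/(2*x)))/x ≤ π/(2*x) - 6/(12*x^2+1) := by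
    have hat : 6*x/(12*x^2+1) ≤ arctan (1/(2*x)) := by
      have h1 := pade_arctan (1/(2*x)) (by positivity)
      have heq : 3*(1/(2*x))/(3+(1/(2*x))^2) = 6*x/(12*x^2+1) := by
        field_simp
        ring
      linarith [heq ▸ h1]
    have h2 : (π/2 - arctan (1/(2*x)))/x ≤ (π/2 - 6*x/(12*x^2+1))/x := by
      gcongr
    have h3 : (π/2 - 6*x/(12*x^2+1))/x = π/(2*x) - 6/(12*x^2+1) := by
      field_simp
    linarith
  have hCST0 : 0 ≤ c*S + T := by positivity
  -- chain
  have hchain1 : (∑' k : ℕ, a k)^2 ≤ (π/(2*x) - 6/(12*x^2+1)) * (c*S + T) := by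
    calc (∑' k : ℕ, a k)^2 ≤ ((π/2 - arctan (1/(2*x)))/x) * (∑' k : ℕ, a k ^ 2 / r k) := hA2
      _ ≤ ((π/2 - arctan (1/(2*x)))/x) * (c*S + T) := by
          apply mul_le_mul_of_nonneg_left hQW hR0
      _ ≤ (π/(2*x) - 6/(12*x^2+1)) * (c*S + T) := mul_le_mul_of_nonneg_right hRb hCST0
  -- scalar inequality
  have hTeq : T = s^2 * S := by
    rw [hsdef, div_pow, Real.sq_sqrt hT0.le, Real.sq_sqrt hS0.le, div_mul_cancel₀ _ hS0.ne']
  have hscal := carlson_scalar s hs1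
  rw [← hxdef, ← hcdef] at hscal
  have hchain2 : (π/(2*x) - 6/(12*x^2+1)) * (c*S + T) ≤ (π*s - 1) * S := by
    have hfac : c*S + T = (c + s^2) * S := by rw [hTeq]; ring
    rw [hfac, ← mul_assoc]
    apply mul_le_mul_of_nonneg_right _ hS0.le
    exact hscal
  have hfinal : (π*s - 1) * S = π * Real.sqrt S * Real.sqrt T - S := by
    have hsS : s * S = Real.sqrt S * Real.sqrt T := by
      rw [hsdef]
      field_simp
      have h2 : Real.sqrt S * Real.sqrt S = S := Real.mul_self_sqrt hS0.le
      linear_combination (-1 : ℝ) * h2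
    calc (π*s - 1) * S = π * (s*S) - S := by ring
      _ = π * (Real.sqrt S * Real.sqrt T) - S := by rw [hsS]
      _ = π * Real.sqrt S * Real.sqrt T - S := by ring
  have := hchain1.trans hchain2
  rw [hfinal] at this
  exact this
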